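/- In a chordal graph, every minimal vertex cut set induces a complete subgraph. -/

import Mathlib

/-- A simple graph is *chordal* if every cycle of length at least four has a chord,
that is, an edge of the graph joining two vertices of the cycle that is not an
edge of the cycle. -/
def SimpleGraph.IsChordal {V : Type*} (G : SimpleGraph V) : Prop :=
  ∀ ⦃v : V⦄ (w : G.Walk v v), w.IsCycle → 4 ≤ w.length →
    ∃ a b, a ∈ w.support ∧ b ∈ w.support ∧ G.Adj a b ∧ s(a, b) ∉ w.edges

/-- `B` is a `(c,f)`-separator of `G`: `c, f ∉ B` and `c` and `f` lie in different
connected components of the induced subgraph `G − B`. -/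
def SimpleGraph.IsSeparator {V : Type*} (G : SimpleGraph V) (c f : V) (Bs : Set V) : Prop :=
  ∃ (hc : c ∈ Bsᶜ) (hf : f ∈ Bsᶜ), ¬ (G.induce Bsᶜ).Reachable ⟨c, hc⟩ ⟨f, hf⟩

/-- `B` is a minimal `(c,f)`-separator: no proper subset of `B` is a `(c,f)`-separator. -/
def SimpleGraph.IsMinSeparator {V : Type*} (G : SimpleGraph V) (c f : V) (Bs : Set V) : Prop :=
  G.IsSeparator c f Bs ∧ ∀ Bs' ⊂ Bs, ¬ G.IsSeparator c f Bs'

/-- `u` and `g` lie in the same connected component of `G − B`. -/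
def SimpleGraph.InSepComp {V : Type*} (G : SimpleGraph V) (Bs : Set V) (u g : V) : Prop :=
  ∃ (hu : u ∈ Bsᶜ) (hg : g ∈ Bsᶜ), (G.induce Bsᶜ).Reachable ⟨u, hu⟩ ⟨g, hg⟩

namespace DiracAux
open SimpleGraph

variable {V : Type*} {G : SimpleGraph V}

/-- reachability in `G` by a walk avoiding `C`. -/
def AReach (G : SimpleGraph V) (C : Set V) (u v : V) : Prop :=
  ∃ w : G.Walk u v, ∀ z ∈ w.support, z ∉ C

lemma AReach.symm {C : Set V} {u v : V} (h : AReach G C u v) : AReach G C v u := by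
  obtain ⟨w, hw⟩ := h
  exact ⟨w.reverse, fun z hz => hw z (by simpa [Walk.support_reverse] using hz)⟩

lemma AReach.trans {C : Set V} {u v x : V} (h : AReach G C u v) (h' : AReach G C v x) :
    AReach G C u x := by
  obtain ⟨w, hw⟩ := h; obtain ⟨w', hw'⟩ := h'
  refine ⟨w.append w', fun z hz => ?_⟩
  rcases (Walk.mem_support_append_iff _ _).mp hz with h | h
  · exact hw z h
  · exact hw' z h

lemma reach_of_walk {C : Set V} {u v : V} (w : G.Walk u v) (hw : ∀ z ∈ w.support, z ∉ C)
    (hu : u ∈ Cᶜ) (hv : v ∈ Cᶜ) : (G.induce Cᶜ).Reachable ⟨u, hu⟩ ⟨v, hv⟩ := by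
  induction w with
  | nil => rfl
  | @cons a b c h p ih =>
    have hb : b ∈ Cᶜ := hw b (by simp)
    have step : (G.induce Cᶜ).Adj ⟨a, hu⟩ ⟨b, hb⟩ := h
    exact step.reachable.trans (ih (fun z hz => hw z (by simp [hz])) hb hv)

lemma walk_of_reach {C : Set V} {u v : V} (hu : u ∈ Cᶜ) (hv : v ∈ Cᶜ)
    (h : (G.induce Cᶜ).Reachable ⟨u, hu⟩ ⟨v, hv⟩) : AReach G C u v := by
  obtain ⟨p⟩ := h
  refine ⟨p.map (SimpleGraph.Embedding.induce Cᶜ).toHom, fun z hz => ?_⟩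
  erw [Walk.support_map, List.mem_map] at hz
  obtain ⟨⟨z', hz'⟩, _, rfl⟩ := hz
  exact hz'

lemma edge_of_length_one {u v : V} {w : G.Walk u v} (h : w.length = 1) :
    s(u, v) ∈ w.edges := by
  cases w with
  | nil => simp at h
  | cons hadj p =>
    have : p.length = 0 := by simpa using h
    have := Walk.eq_of_length_eq_zero this
    subst this
    simp

lemma shortcut {u v a b : V} (p : G.Walk u v) (ha : a ∈ p.support) (hb : b ∈ p.support)
    (hab : G.Adj a b) (hne : s(a, b) ∉ p.edges) :
    ∃ q : G.Walk u v, q.length < p.length ∧ ∀ z ∈ q.support, z ∈ p.support := by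
  classical
  by_cases hbr : b ∈ (p.dropUntil a ha).support
  · set r := p.dropUntil a ha with hr
    have hlen : p.length = (p.takeUntil a ha).length + r.length := by
      conv_lhs => rw [← p.take_spec ha]
      rw [Walk.length_append]
    have hrlen : r.length = (r.takeUntil b hbr).length + (r.dropUntil b hbr).length := by
      conv_lhs => rw [← r.take_spec hbr]
      rw [Walk.length_append]
    have htk2 : 2 ≤ (r.takeUntil b hbr).length := by
      rcases Nat.lt_or_ge (r.takeUntil b hbr).length 2 with h2 | h2
      · interval_cases h : (r.takeUntil b hbr).length
        · exact absurd (Walk.eq_of_length_eq_zero h) hab.ne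
        · exact absurd (p.edges_dropUntil_subset ha
            ((r.edges_takeUntil_subset hbr) (edge_of_length_one h))) hne
      · exact h2
    refine ⟨(p.takeUntil a ha).append (Walk.cons hab (r.dropUntil b hbr)), ?_, ?_⟩
    · rw [Walk.length_append, Walk.length_cons]
      omega
    · intro z hz
      rcases (Walk.mem_support_append_iff _ _).mp hz with h | h
      · exact p.support_takeUntil_subset ha h
      · rcases (by simpa using h : z = a ∨ z ∈ (r.dropUntil b hbr).support) with rfl | h
        · exact ha
        · exact p.support_dropUntil_subset ha (r.support_dropUntil_subset hbr h)
  · set t := p.takeUntil a ha with ht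
    have hbt : b ∈ t.support := by
      have := (p.take_spec ha) ▸ hb
      rcases (Walk.mem_support_append_iff _ _).mp this with h | h
      · exact h
      · exact absurd h hbr
    have hlen : p.length = t.length + (p.dropUntil a ha).length := by
      conv_lhs => rw [← p.take_spec ha]
      rw [Walk.length_append]
    have htlen : t.length = (t.takeUntil b hbt).length + (t.dropUntil b hbt).length := by
      conv_lhs => rw [← t.take_spec hbt]
      rw [Walk.length_append]
    have htk2 : 2 ≤ (t.dropUntil b hbt).length := by
      rcases Nat.lt_or_ge (t.dropUntil b hbt).length 2 with h2 | h2
      · interval_cases h : (t.dropUntil b hbt).length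
        · exact absurd (Walk.eq_of_length_eq_zero h) hab.ne'
        · have : s(b, a) ∈ p.edges :=
            p.edges_takeUntil_subset ha ((t.edges_dropUntil_subset hbt) (edge_of_length_one h))
          rw [Sym2.eq_swap] at this
          exact absurd this hne
      · exact h2
    refine ⟨(t.takeUntil b hbt).append (Walk.cons hab.symm (p.dropUntil a ha)), ?_, ?_⟩
    · rw [Walk.length_append, Walk.length_cons]
      omega
    · intro z hz
      rcases (Walk.mem_support_append_iff _ _).mp hz with h | h
      · exact p.support_takeUntil_subset ha (t.support_takeUntil_subset hbt h)
      · rcases (by simpa using h : z = b ∨ z ∈ (p.dropUntil a ha).support) with rfl | h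
        · exact hb
        · exact p.support_dropUntil_subset ha h

lemma exists_min_walk {u v : V} (S : Set V)
    (h : ∃ w : G.Walk u v, ∀ z ∈ w.support, z ∈ S) :
    ∃ P : G.Walk u v, P.IsPath ∧ (∀ z ∈ P.support, z ∈ S) ∧
      ∀ Q : G.Walk u v, (∀ z ∈ Q.support, z ∈ S) → P.length ≤ Q.length := by
  classical
  let Pred : ℕ → Prop := fun n => ∃ w : G.Walk u v, w.length = n ∧ ∀ z ∈ w.support, z ∈ S
  have hP : ∃ n, Pred n := by
    obtain ⟨w, hw⟩ := h
    exact ⟨w.length, w, rfl, hw⟩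
  obtain ⟨w0, hw0len, hw0⟩ := Nat.find_spec hP
  refine ⟨w0.bypass, Walk.bypass_isPath w0, fun z hz => hw0 z (w0.support_bypass_subset hz), ?_⟩
  intro Q hQ
  calc w0.bypass.length ≤ w0.length := Walk.length_bypass_le w0
    _ = Nat.find hP := hw0len
    _ ≤ Q.length := Nat.find_min' hP ⟨Q, rfl, hQ⟩

lemma no_cross {C : Set V} {x t1 t2 : V} (hnr : ¬ AReach G C t1 t2)
    (hnbr : ∀ a, G.Adj x a → ¬ AReach G C a t1) :
    ∀ {u : V} (w : G.Walk u t2), AReach G C u t1 → (∀ z ∈ w.support, z ∉ C \ {x}) → False := by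
  intro u w
  induction w with
  | nil =>
    intro hu _
    obtain ⟨w', hw'⟩ := hu
    exact hnr ⟨w'.reverse, fun z hz => hw' z (by simpa [Walk.support_reverse] using hz)⟩
  | @cons a b c h p ih =>
    intro hu hsupp
    by_cases hbC : b ∈ C
    · have hbx : b = x := by
        by_contra hbx
        exact hsupp b (by simp) ⟨hbC, hbx⟩
      subst hbx
      exact hnbr a h.symm hu
    · have hbA : AReach G C b t1 := by
        obtain ⟨w', hw'⟩ := hu
        exact ⟨Walk.cons h.symm w', by
          intro z hz
          rcases (by simpa using hz : z = b ∨ z ∈ w'.support) with rfl | hz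
          · exact hbC
          · exact hw' z hz⟩
      exact ih hnr hbA (fun z hz => hsupp z (by simp [hz]))

end DiracAux

open DiracAux SimpleGraph in
/-- **Dirac's theorem.** In a finite connected chordal graph, every minimal cut set
(a set `C` separating a pair of vertices `c, d` such that no proper subset of `C`
separates the same pair) induces a complete subgraph. -/
theorem minimal_cutset_pairwise_adj {V : Type*} [Fintype V] (G : SimpleGraph V)
    (hconn : G.Connected) (hch : G.IsChordal)
    (c d : V) (C : Set V) (hmin : G.IsMinSeparator c d C) :
    C.Pairwise G.Adj := by
  classical
  obtain ⟨⟨hc, hd, hcd⟩, hmin2⟩ := hmin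
  have hcC : c ∉ C := hc
  have hdC : d ∉ C := hd
  have hncd : ¬ AReach G C c d := by
    rintro ⟨w, hw⟩
    exact hcd (reach_of_walk w hw hc hd)
  set SA : Set V := {z | AReach G C z c} with hSAdef
  set SB : Set V := {z | AReach G C z d} with hSBdef
  have hSAC : ∀ z ∈ SA, z ∉ C := fun z hz => by
    obtain ⟨w, hw⟩ := hz
    exact hw z w.start_mem_support
  have hSBC : ∀ z ∈ SB, z ∉ C := fun z hz => by
    obtain ⟨w, hw⟩ := hz
    exact hw z w.start_mem_support
  have hdisj : ∀ z, z ∈ SA → z ∈ SB → False := fun z hzA hzB =>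
    hncd (AReach.trans (AReach.symm hzA) hzB)
  have hAdjAB : ∀ a b, a ∈ SA → b ∈ SB → ¬ G.Adj a b := by
    intro a b haA hbB hab
    apply hncd
    refine AReach.trans (AReach.symm haA) (AReach.trans ⟨Walk.cons hab Walk.nil, ?_⟩ hbB)
    intro z hz
    rcases (by simpa using hz : z = a ∨ z = b) with rfl | rfl
    · exact hSAC z haA
    · exact hSBC z hbB
  -- every vertex of C has a neighbor in the component of c and in the component of d
  have hnbrA : ∀ x ∈ C, ∃ a, G.Adj x a ∧ a ∈ SA := by
    intro x hxC
    by_contra hcon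
    push_neg at hcon
    have hss : C \ {x} ⊂ C := Set.sdiff_singleton_ssubset.mpr hxC
    apply hmin2 _ hss
    have hc' : c ∈ (C \ {x})ᶜ := fun h => hcC h.1
    have hd' : d ∈ (C \ {x})ᶜ := fun h => hdC h.1
    refine ⟨hc', hd', fun hr => ?_⟩
    obtain ⟨w, hw⟩ := walk_of_reach hc' hd' hr
    exact no_cross hncd (fun a ha h => hcon a ha h) w
      ⟨Walk.nil, by intro z hz; simp at hz; subst hz; exact hcC⟩ hw
  have hnbrB : ∀ x ∈ C, ∃ a, G.Adj x a ∧ a ∈ SB := by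
    intro x hxC
    by_contra hcon
    push_neg at hcon
    have hss : C \ {x} ⊂ C := Set.sdiff_singleton_ssubset.mpr hxC
    apply hmin2 _ hss
    have hc' : c ∈ (C \ {x})ᶜ := fun h => hcC h.1
    have hd' : d ∈ (C \ {x})ᶜ := fun h => hdC h.1
    refine ⟨hc', hd', fun hr => ?_⟩
    obtain ⟨w, hw⟩ := walk_of_reach hc' hd' hr
    have hndc : ¬ AReach G C d c := fun h => hncd h.symm
    exact no_cross hndc (fun a ha h => hcon a ha h) w.reverse
      ⟨Walk.nil, by intro z hz; simp at hz; subst hz; exact hdC⟩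
      (fun z hz => hw z (by simpa [Walk.support_reverse] using hz))
  -- main argument
  intro x hxC y hyC hxy
  by_contra hadj
  have hxSA : x ∉ SA := fun h => hSAC x h hxC
  have hySA : y ∉ SA := fun h => hSAC y h hyC
  have hxSB : x ∉ SB := fun h => hSBC x h hxC
  have hySB : y ∉ SB := fun h => hSBC y h hyC
  -- there is a walk from x to y through SA
  have hexA : ∃ w : G.Walk x y, ∀ z ∈ w.support, z ∈ insert x (insert y SA) := by
    obtain ⟨ax, haxadj, wa, hwa⟩ := hnbrA x hxC
    obtain ⟨ay, hayadj, wb, hwb⟩ := hnbrA y hyC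
    refine ⟨Walk.cons haxadj ((wa.append wb.reverse).append
      (Walk.cons hayadj.symm Walk.nil)), ?_⟩
    intro z hz
    rw [Walk.support_cons, List.mem_cons] at hz
    rcases hz with rfl | hz
    · exact Set.mem_insert _ _
    rcases (Walk.mem_support_append_iff _ _).mp hz with hz | hz
    · rcases (Walk.mem_support_append_iff _ _).mp hz with hz | hz
      · refine Set.mem_insert_of_mem _ (Set.mem_insert_of_mem _ ?_)
        exact ⟨wa.dropUntil z hz, fun t ht => hwa t (wa.support_dropUntil_subset hz ht)⟩
      · rw [Walk.support_reverse, List.mem_reverse] at hz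
        refine Set.mem_insert_of_mem _ (Set.mem_insert_of_mem _ ?_)
        exact ⟨wb.dropUntil z hz, fun t ht => hwb t (wb.support_dropUntil_subset hz ht)⟩
    · rcases (by simpa using hz : z = ay ∨ z = y) with rfl | rfl
      · exact Set.mem_insert_of_mem _ (Set.mem_insert_of_mem _
          ⟨wb, hwb⟩)
      · exact Set.mem_insert_of_mem _ (Set.mem_insert _ _)
  have hexB : ∃ w : G.Walk x y, ∀ z ∈ w.support, z ∈ insert x (insert y SB) := by
    obtain ⟨ax, haxadj, wa, hwa⟩ := hnbrB x hxC
    obtain ⟨ay, hayadj, wb, hwb⟩ := hnbrB y hyC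
    refine ⟨Walk.cons haxadj ((wa.append wb.reverse).append
      (Walk.cons hayadj.symm Walk.nil)), ?_⟩
    intro z hz
    rw [Walk.support_cons, List.mem_cons] at hz
    rcases hz with rfl | hz
    · exact Set.mem_insert _ _
    rcases (Walk.mem_support_append_iff _ _).mp hz with hz | hz
    · rcases (Walk.mem_support_append_iff _ _).mp hz with hz | hz
      · refine Set.mem_insert_of_mem _ (Set.mem_insert_of_mem _ ?_)
        exact ⟨wa.dropUntil z hz, fun t ht => hwa t (wa.support_dropUntil_subset hz ht)⟩
      · rw [Walk.support_reverse, List.mem_reverse] at hz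
        refine Set.mem_insert_of_mem _ (Set.mem_insert_of_mem _ ?_)
        exact ⟨wb.dropUntil z hz, fun t ht => hwb t (wb.support_dropUntil_subset hz ht)⟩
    · rcases (by simpa using hz : z = ay ∨ z = y) with rfl | rfl
      · exact Set.mem_insert_of_mem _ (Set.mem_insert_of_mem _
          ⟨wb, hwb⟩)
      · exact Set.mem_insert_of_mem _ (Set.mem_insert _ _)
  obtain ⟨P, hPpath, hPsupp, hPmin⟩ := exists_min_walk _ hexA
  obtain ⟨Q, hQpath, hQsupp, hQmin⟩ := exists_min_walk _ hexB
  have hPmem : ∀ z ∈ P.support, z = x ∨ z = y ∨ z ∈ SA := fun z hz => by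
    simpa [Set.mem_insert_iff] using hPsupp z hz
  have hQmem : ∀ z ∈ Q.support, z = x ∨ z = y ∨ z ∈ SB := fun z hz => by
    simpa [Set.mem_insert_iff] using hQsupp z hz
  have hPlen : 2 ≤ P.length := by
    rcases Nat.lt_or_ge P.length 2 with h2 | h2
    · interval_cases h : P.length
      · exact absurd (Walk.eq_of_length_eq_zero h) hxy
      · exact absurd ((G.mem_edgeSet).mp
          (P.edges_subset_edgeSet (edge_of_length_one h))) hadj
    · exact h2
  have hQlen : 2 ≤ Q.length := by
    rcases Nat.lt_or_ge Q.length 2 with h2 | h2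
    · interval_cases h : Q.length
      · exact absurd (Walk.eq_of_length_eq_zero h) hxy
      · exact absurd ((G.mem_edgeSet).mp
          (Q.edges_subset_edgeSet (edge_of_length_one h))) hadj
    · exact h2
  -- the cycle
  set w : G.Walk x x := P.append Q.reverse with hwdef
  have hbothxy : ∀ z, (z = x ∨ z = y ∨ z ∈ SA) → (z = x ∨ z = y ∨ z ∈ SB) →
      z = x ∨ z = y := by
    intro z h1 h2
    rcases h1 with rfl | rfl | h1
    · exact Or.inl rfl
    · exact Or.inr rfl
    rcases h2 with rfl | rfl | h2
    · exact Or.inl rfl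
    · exact Or.inr rfl
    · exact absurd h2 (fun h => hdisj z h1 h)
  have hcyc : w.IsCycle := by
    refine ⟨⟨⟨?_⟩, ?_⟩, ?_⟩
    · -- edges nodup
      rw [hwdef, Walk.edges_append, Walk.edges_reverse]
      refine List.Nodup.append hPpath.isTrail.edges_nodup
        (by simpa using hQpath.isTrail.edges_nodup) ?_
      intro e heP heQ
      rw [List.mem_reverse] at heQ
      induction e using Sym2.ind with
      | _ u v =>
        have huv : G.Adj u v := (G.mem_edgeSet).mp (P.edges_subset_edgeSet heP)
        have huP := P.fst_mem_support_of_mem_edges heP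
        have hvP := P.snd_mem_support_of_mem_edges heP
        have huQ := Q.fst_mem_support_of_mem_edges heQ
        have hvQ := Q.snd_mem_support_of_mem_edges heQ
        rcases hbothxy u (hPmem u huP) (hQmem u huQ) with rfl | rfl <;>
          rcases hbothxy v (hPmem v hvP) (hQmem v hvQ) with rfl | rfl
        · exact huv.ne rfl
        · exact hadj huv
        · exact hadj huv.symm
        · exact huv.ne rfl
    · -- not nil
      intro h
      have := congrArg Walk.length h
      rw [hwdef, Walk.length_append, Walk.length_reverse] at this
      simp only [Walk.length_nil] at this
      omega
    · -- support tail nodup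
      have hteq : w.support.tail = P.support.tail ++ Q.reverse.support.tail := by
        rw [hwdef, Walk.support_append, P.support_eq_cons, List.cons_append, List.tail_cons]
        rfl
      rw [hteq]
      have hxP : x ∉ P.support.tail := by
        have := hPpath.support_nodup
        rw [P.support_eq_cons] at this
        exact this.notMem
      have hyQ : y ∉ Q.reverse.support.tail := by
        have := hQpath.reverse.support_nodup
        rw [Q.reverse.support_eq_cons] at this
        exact this.notMem
      refine List.Nodup.append hPpath.support_nodup.tail
        hQpath.reverse.support_nodup.tail ?_
      intro z hzP hzQ
      have hz1 : z ∈ P.support := List.mem_of_mem_tail hzP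
      have hz2 : z ∈ Q.support := by
        have := List.mem_of_mem_tail hzQ
        rwa [Walk.support_reverse, List.mem_reverse] at this
      have hzx : z ≠ x := fun h => hxP (h ▸ hzP)
      have hzy : z ≠ y := fun h => hyQ (h ▸ hzQ)
      rcases hbothxy z (hPmem z hz1) (hQmem z hz2) with rfl | rfl
      · exact hzx rfl
      · exact hzy rfl
  have hlen4 : 4 ≤ w.length := by
    rw [hwdef, Walk.length_append, Walk.length_reverse]
    omega
  obtain ⟨a, b, haS, hbS, hab, hne⟩ := hch w hcyc hlen4
  have hneP : s(a, b) ∉ P.edges := fun h =>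
    hne (by rw [hwdef, Walk.edges_append]; exact List.mem_append_left _ h)
  have hneQ : s(a, b) ∉ Q.edges := fun h =>
    hne (by
      rw [hwdef, Walk.edges_append, Walk.edges_reverse]
      exact List.mem_append_right _ (List.mem_reverse.mpr h))
  have hsplit : ∀ z ∈ w.support, z ∈ P.support ∨ z ∈ Q.support := by
    intro z hz
    rw [hwdef] at hz
    rcases (Walk.mem_support_append_iff _ _).mp hz with h | h
    · exact Or.inl h
    · right; rwa [Walk.support_reverse, List.mem_reverse] at h
  have bothP : a ∈ P.support → b ∈ P.support → False := by
    intro haP hbP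
    obtain ⟨q, hql, hqs⟩ := shortcut P haP hbP hab hneP
    have := hPmin q (fun z hz => hPsupp z (hqs z hz))
    omega
  have bothQ : a ∈ Q.support → b ∈ Q.support → False := by
    intro haQ hbQ
    obtain ⟨q, hql, hqs⟩ := shortcut Q haQ hbQ hab hneQ
    have := hQmin q (fun z hz => hQsupp z (hqs z hz))
    omega
  rcases hsplit a haS with haP | haQ <;> rcases hsplit b hbS with hbP | hbQ
  · exact bothP haP hbP
  · -- a ∈ P, b ∈ Q
    rcases hPmem a haP with rfl | rfl | haA
    · exact bothQ Q.start_mem_support hbQ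
    · exact bothQ Q.end_mem_support hbQ
    rcases hQmem b hbQ with rfl | rfl | hbB
    · exact bothP haP P.start_mem_support
    · exact bothP haP P.end_mem_support
    · exact hAdjAB a b haA hbB hab
  · -- a ∈ Q, b ∈ P
    rcases hQmem a haQ with rfl | rfl | haB
    · exact bothP P.start_mem_support hbP
    · exact bothP P.end_mem_support hbP
    rcases hPmem b hbP with rfl | rfl | hbA
    · exact bothQ haQ Q.start_mem_support
    · exact bothQ haQ Q.end_mem_support
    · exact hAdjAB b a hbA haB hab.symm
  · exact bothQ haQ hbQ
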